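/- arXiv:1510.01439 — 5 statements merged into one kernel-verified Lean document; each statement's English description precedes it below -/
import Mathlib

section
/- For any binary-input discrete memoryless channel W with input alphabet {0,1} and output alphabet Y, the symmetric capacity satisfies I(W) ≥ log₂(2/(1+Z(W))), where Z(W) = Σ_{y∈Y} √(W(y|0)W(y|1)) is the Bhattacharyya parameter. -/
set_option maxHeartbeats 1000000

/-- Symmetric capacity of a binary-input channel `W` with finite output alphabet `Y`,
given by conditional pmfs `W y x` (probability of output `y` given input `x`). -/
noncomputable def symCap {Y : Type*} [Fintype Y] (W : Y → Bool → ℝ) : ℝ :=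
  ∑ y : Y, ∑ x : Bool,
    (1/2) * W y x * Real.logb 2 (W y x / ((1/2) * W y false + (1/2) * W y true))

/-- Bhattacharyya parameter `Z(W) = ∑_y √(W(y|0) W(y|1))`. -/
noncomputable def bhatt {Y : Type*} [Fintype Y] (W : Y → Bool → ℝ) : ℝ :=
  ∑ y : Y, Real.sqrt (W y false * W y true)

/-- `I(W) ≥ log₂ (2 / (1 + Z(W)))`. -/
theorem symCap_ge_logb_two_div_one_add_bhatt
    {Y : Type*} [Fintype Y] (W : Y → Bool → ℝ)
    (hnonneg : ∀ y x, 0 ≤ W y x)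
    (hsum : ∀ x : Bool, ∑ y : Y, W y x = 1) :
    Real.logb 2 (2 / (1 + bhatt W)) ≤ symCap W := by
  classical
  set q : Y → ℝ := fun y => (1/2) * W y false + (1/2) * W y true with hq
  set Z : ℝ := bhatt W with hZ
  have hZ0 : 0 ≤ Z := Finset.sum_nonneg fun y _ => Real.sqrt_nonneg _
  have hqnn : ∀ y, 0 ≤ q y := fun y => by
    have := hnonneg y false; have := hnonneg y true; simp only [hq]; positivity
  -- support set
  set s : Finset (Y × Bool) := Finset.univ.filter (fun p => 0 < W p.1 p.2) with hs
  have hWp : ∀ p ∈ s, 0 < W p.1 p.2 := fun p hp => (Finset.mem_filter.mp hp).2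
  have hqp : ∀ p ∈ s, 0 < q p.1 := by
    intro p hp
    have h := hWp p hp
    cases hx : p.2 <;> rw [hx] at h <;> simp only [hq] <;> nlinarith [hnonneg p.1 false, hnonneg p.1 true]
  -- rewrite symCap as a sum over the product type
  have hsym : symCap W = ∑ p : Y × Bool, (1/2) * W p.1 p.2 * Real.logb 2 (W p.1 p.2 / q p.1) := by
    rw [symCap, Fintype.sum_prod_type]
  -- restrict to support
  have hzero : ∀ (f : Y × Bool → ℝ), (∀ p, W p.1 p.2 = 0 → f p = 0) →
      ∑ p ∈ s, f p = ∑ p : Y × Bool, f p := by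
    intro f hf
    refine Finset.sum_subset (Finset.subset_univ _) ?_
    intro p _ hp
    apply hf
    by_contra h
    exact hp (Finset.mem_filter.mpr ⟨Finset.mem_univ _, lt_of_le_of_ne (hnonneg p.1 p.2) (Ne.symm h)⟩)
  have hwsum : ∑ p ∈ s, (1/2) * W p.1 p.2 = 1 := by
    rw [hzero (fun p => (1/2) * W p.1 p.2) (fun p h => by simp [h])]
    have hx : ∀ x : Bool, ∑ y : Y, (1/2) * W y x = 1/2 := by
      intro x; rw [← Finset.mul_sum, hsum x, mul_one]
    rw [Fintype.sum_prod_type_right, Fintype.sum_bool, hx true, hx false]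
    norm_num
  have hsym' : symCap W = ∑ p ∈ s, (1/2) * W p.1 p.2 * Real.logb 2 (W p.1 p.2 / q p.1) := by
    rw [hsym, hzero _ (fun p h => by rw [h]; ring)]
  -- key identity: 1 - symCap = ∑_s w * logb 2 (2 q / W)
  have hkey : 1 - symCap W = ∑ p ∈ s, (1/2) * W p.1 p.2 * Real.logb 2 (2 * q p.1 / W p.1 p.2) := by
    have hterm : ∑ p ∈ s, (1/2) * W p.1 p.2 * Real.logb 2 (2 * q p.1 / W p.1 p.2)
        = ∑ p ∈ s, ((1/2) * W p.1 p.2 - (1/2) * W p.1 p.2 * Real.logb 2 (W p.1 p.2 / q p.1)) := by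
      refine Finset.sum_congr rfl ?_
      intro p hp
      have hW := hWp p hp
      have hq' := hqp p hp
      have hlogid : Real.logb 2 (2 * q p.1 / W p.1 p.2) = 1 - Real.logb 2 (W p.1 p.2 / q p.1) := by
        rw [Real.logb_div (mul_pos two_pos hq').ne' (ne_of_gt hW), Real.logb_div (ne_of_gt hW) (ne_of_gt hq'),
          Real.logb_mul (by norm_num) (ne_of_gt hq')]
        have h22 : Real.logb 2 2 = 1 := Real.logb_self_eq_one (by norm_num)
        rw [h22]; ring
      rw [hlogid]; ring
    rw [hterm, Finset.sum_sub_distrib, hwsum, hsym']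
  -- points for Jensen
  set t : Y × Bool → ℝ := fun p => Real.sqrt (2 * q p.1 / W p.1 p.2) with ht
  have htpos : ∀ p ∈ s, 0 < t p := by
    intro p hp
    exact Real.sqrt_pos.mpr (div_pos (by have := hqp p hp; linarith) (hWp p hp))
  set S : ℝ := ∑ p ∈ s, (1/2) * W p.1 p.2 * t p with hS
  have hSpos : 0 < S := by
    have hsne : s.Nonempty := by
      by_contra h
      rw [Finset.not_nonempty_iff_eq_empty] at h
      rw [h] at hwsum; simp at hwsum
    exact Finset.sum_pos (fun p hp => mul_pos (mul_pos (by norm_num) (hWp p hp)) (htpos p hp)) hsne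
  -- Jensen's inequality
  have hjensen : ∑ p ∈ s, (1/2) * W p.1 p.2 * Real.log (t p) ≤ Real.log S := by
    have := strictConcaveOn_log_Ioi.concaveOn.le_map_sum
      (t := s) (w := fun p => (1/2) * W p.1 p.2) (p := t)
      (fun p hp => by have := hnonneg p.1 p.2; positivity) hwsum (fun p hp => htpos p hp)
    rw [hS]
    simpa [smul_eq_mul] using this
  -- bound S by the full sum T
  set T : ℝ := ∑ y : Y, (1/2) * (Real.sqrt ((W y false + W y true) * W y false)
      + Real.sqrt ((W y false + W y true) * W y true)) with hT
  have hST : S ≤ T := by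
    have h1 : S ≤ ∑ p : Y × Bool, (1/2) * W p.1 p.2 * t p := by
      refine Finset.sum_le_sum_of_subset_of_nonneg (Finset.subset_univ _) ?_
      intro p _ _
      have := Real.sqrt_nonneg (2 * q p.1 / W p.1 p.2)
      have := hnonneg p.1 p.2
      positivity
    have h2 : ∑ p : Y × Bool, (1/2) * W p.1 p.2 * t p = T := by
      rw [Fintype.sum_prod_type, hT]
      refine Finset.sum_congr rfl ?_
      intro y _
      have hkey2 : ∀ (X A : ℝ), 0 ≤ X → 0 ≤ A → X * Real.sqrt (A / X) = Real.sqrt (A * X) := by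
        intro X A hX hA
        rcases eq_or_lt_of_le hX with h0 | h0
        · simp [← h0]
        · rw [Real.sqrt_div hA, Real.sqrt_mul hA]
          have h1 : X * (Real.sqrt A / Real.sqrt X) = Real.sqrt A * (X / Real.sqrt X) := by ring
          rw [h1, Real.div_sqrt]
      have hterm : ∀ x : Bool, (1/2) * W y x * Real.sqrt (2 * q y / W y x)
          = (1/2) * Real.sqrt ((W y false + W y true) * W y x) := by
        intro x
        have h2q : 2 * q y = W y false + W y true := by simp only [hq]; ring
        have hq2 : (0:ℝ) ≤ 2 * q y := by have := hqnn y; linarith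
        rw [mul_assoc, hkey2 _ _ (hnonneg y x) hq2, mul_comm (2 * q y), ← h2q,
          mul_comm (W y x)]
      simp only [Fintype.sum_bool, ht]
      rw [hterm true, hterm false]
      ring
    linarith
  -- Cauchy-Schwarz : T^2 ≤ 1 + Z
  have hCS : T ^ 2 ≤ 1 + Z := by
    set f : Y → ℝ := fun y => Real.sqrt ((W y false + W y true) / 2) with hf
    set g : Y → ℝ := fun y => (Real.sqrt (W y false) + Real.sqrt (W y true)) / Real.sqrt 2 with hg
    have hcs := Finset.sum_mul_sq_le_sq_mul_sq Finset.univ f g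
    have h2 : Real.sqrt 2 * Real.sqrt 2 = 2 := Real.mul_self_sqrt (by norm_num)
    have h2pos : (0:ℝ) < Real.sqrt 2 := Real.sqrt_pos.mpr (by norm_num)
    have hTfg : T = ∑ y : Y, f y * g y := by
      refine Finset.sum_congr rfl ?_
      intro y _
      have ha := hnonneg y false
      have hb := hnonneg y true
      have hab : (0:ℝ) ≤ W y false + W y true := by linarith
      rw [hf, hg]
      simp only
      rw [Real.sqrt_div hab, Real.sqrt_mul hab, Real.sqrt_mul hab]
      field_simp
      rw [Real.sq_sqrt (by norm_num : (0:ℝ) ≤ 2)]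
      nlinarith [Real.sqrt_nonneg (W y false), Real.sqrt_nonneg (W y true),
        Real.sqrt_nonneg (W y false + W y true)]
    have hfsq : ∑ y : Y, f y ^ 2 = 1 := by
      have : ∀ y : Y, f y ^ 2 = (W y false + W y true) / 2 := by
        intro y
        rw [hf]
        exact Real.sq_sqrt (by have := hnonneg y false; have := hnonneg y true; linarith)
      simp only [this]
      rw [← Finset.sum_div, Finset.sum_add_distrib, hsum false, hsum true]
      norm_num
    have hgsq : ∑ y : Y, g y ^ 2 = 1 + Z := by
      have hgy : ∀ y : Y, g y ^ 2 = (W y false + W y true) / 2 + Real.sqrt (W y false * W y true) := by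
        intro y
        have ha := hnonneg y false
        have hb := hnonneg y true
        rw [hg]
        simp only
        rw [div_pow, Real.sq_sqrt (by norm_num : (0:ℝ) ≤ 2), add_sq,
          Real.sq_sqrt ha, Real.sq_sqrt hb, Real.sqrt_mul ha]
        ring
      simp only [hgy]
      rw [Finset.sum_add_distrib, hZ, bhatt]
      congr 1
      rw [← Finset.sum_div, Finset.sum_add_distrib, hsum false, hsum true]
      norm_num
    rw [hTfg]
    calc (∑ y : Y, f y * g y) ^ 2 ≤ (∑ y : Y, f y ^ 2) * ∑ y : Y, g y ^ 2 := hcs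
      _ = 1 + Z := by rw [hfsq, hgsq]; ring
  -- combine the logarithmic estimates
  have hTpos : 0 < T := lt_of_lt_of_le hSpos hST
  have hlog : ∑ p ∈ s, (1/2) * W p.1 p.2 * Real.log (2 * q p.1 / W p.1 p.2)
      ≤ Real.log (1 + Z) := by
    have hstep : ∀ p ∈ s, (1/2) * W p.1 p.2 * Real.log (2 * q p.1 / W p.1 p.2)
        = (1/2) * W p.1 p.2 * (2 * Real.log (t p)) := by
      intro p hp
      have : 2 * q p.1 / W p.1 p.2 = t p ^ 2 := by
        rw [ht]
        exact (Real.sq_sqrt (le_of_lt (div_pos (by linarith [hqp p hp]) (hWp p hp)))).symm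
      rw [this, Real.log_pow]
      push_cast
      ring
    rw [Finset.sum_congr rfl hstep]
    have h1 : ∑ p ∈ s, (1/2) * W p.1 p.2 * (2 * Real.log (t p))
        = 2 * ∑ p ∈ s, (1/2) * W p.1 p.2 * Real.log (t p) := by
      rw [Finset.mul_sum]; exact Finset.sum_congr rfl fun p _ => by ring
    rw [h1]
    calc 2 * ∑ p ∈ s, (1/2) * W p.1 p.2 * Real.log (t p)
        ≤ 2 * Real.log S := by linarith [hjensen]
      _ ≤ 2 * Real.log T := by
          have := Real.log_le_log hSpos hST
          linarith
      _ = Real.log (T ^ 2) := by rw [Real.log_pow]; push_cast; ring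
      _ ≤ Real.log (1 + Z) := Real.log_le_log (by positivity) hCS
  -- convert to logb and conclude
  have hlog2 : (0:ℝ) < Real.log 2 := Real.log_pos (by norm_num)
  have hmain : 1 - symCap W ≤ Real.logb 2 (1 + Z) := by
    rw [hkey]
    have : ∑ p ∈ s, (1/2) * W p.1 p.2 * Real.logb 2 (2 * q p.1 / W p.1 p.2)
        = (∑ p ∈ s, (1/2) * W p.1 p.2 * Real.log (2 * q p.1 / W p.1 p.2)) / Real.log 2 := by
      rw [Finset.sum_div]
      exact Finset.sum_congr rfl fun p _ => by rw [Real.logb]; ring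
    rw [this, Real.logb]
    exact (div_le_div_iff_of_pos_right hlog2).mpr hlog
  have h1Z : (0:ℝ) < 1 + Z := by linarith
  rw [Real.logb_div (by norm_num) (ne_of_gt h1Z)]
  have h22 : Real.logb 2 2 = 1 := Real.logb_self_eq_one (by norm_num)
  rw [h22]
  linarith
end

section
/- For any binary-input discrete memoryless channel W, the symmetric capacity satisfies I(W) ≤ √(1 − Z(W)²), where Z(W) is the Bhattacharyya parameter. -/
open Real Finset

lemma binent_ge (t : ℝ) (h0 : 0 ≤ t) (h1 : t ≤ 1) :
    Real.log 2 * (1 - |2*t - 1|) ≤ Real.binEntropy t := by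
  have hc := Real.strictConcave_binEntropy.concaveOn.2
  rcases le_total t (1/2) with h | h
  · have habs : |2*t - 1| = 1 - 2*t := by rw [abs_of_nonpos (by linarith)]; ring
    have this := hc (x := 0) (by constructor <;> norm_num) (y := 2⁻¹)
      (by constructor <;> norm_num) (a := 1 - 2*t) (b := 2*t)
      (by linarith) (by linarith) (by ring)
    have harg : (1 - 2*t) • (0:ℝ) + (2*t) • (2⁻¹:ℝ) = t := by
      simp only [smul_eq_mul]; ring
    rw [harg] at this
    simp only [Real.binEntropy_zero, Real.binEntropy_two_inv, smul_eq_mul] at this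
    rw [habs]; nlinarith [this]
  · have habs : |2*t - 1| = 2*t - 1 := abs_of_nonneg (by linarith)
    have this := hc (x := 1) (by constructor <;> norm_num) (y := 2⁻¹)
      (by constructor <;> norm_num) (a := 2*t - 1) (b := 2 - 2*t)
      (by linarith) (by linarith) (by ring)
    have harg : (2*t - 1) • (1:ℝ) + (2 - 2*t) • (2⁻¹:ℝ) = t := by
      simp only [smul_eq_mul]; ring
    rw [harg] at this
    simp only [Real.binEntropy_one, Real.binEntropy_two_inv, smul_eq_mul] at this
    rw [habs]; nlinarith [this]

lemma mul_logb_two_mul (a : ℝ) (ha : 0 ≤ a) :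
    a * Real.logb 2 (2*a) = a + a * Real.logb 2 a := by
  rcases eq_or_lt_of_le ha with h | h
  · simp [← h]
  · rw [Real.logb, Real.log_mul (by norm_num) (ne_of_gt h), Real.logb]
    have : Real.log 2 ≠ 0 := by positivity
    field_simp

lemma pointwise (p q : ℝ) (hp : 0 ≤ p) (hq : 0 ≤ q) :
    1/2 * p * Real.logb 2 (p/(1/2*p+1/2*q)) + 1/2 * q * Real.logb 2 (q/(1/2*p+1/2*q))
      ≤ 1/2 * |p - q| := by
  by_cases hs : p + q = 0
  · have hp0 : p = 0 := by linarith
    have hq0 : q = 0 := by linarith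
    simp [hp0, hq0]
  have hspos : 0 < p + q := lt_of_le_of_ne (by linarith) (Ne.symm hs)
  set s := p + q with hsdef
  set t := p / s with htdef
  have ht0 : 0 ≤ t := div_nonneg hp hspos.le
  have ht1 : t ≤ 1 := by rw [htdef, div_le_one hspos]; linarith
  have hps : p = s * t := by rw [htdef]; field_simp
  have hqs : q = s * (1 - t) := by rw [htdef, mul_sub, mul_div_cancel₀ _ hspos.ne', hsdef]; ring
  have harg1 : p/(1/2*p+1/2*q) = 2*t := by
    rw [htdef, hsdef]; field_simp
  have harg2 : q/(1/2*p+1/2*q) = 2*(1-t) := by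
    rw [htdef, hsdef]; have hs' : p + q ≠ 0 := hs; field_simp; ring
  have h1 : t * Real.logb 2 (2*t) = t + t * Real.logb 2 t := mul_logb_two_mul t ht0
  have h2 : (1-t) * Real.logb 2 (2*(1-t)) = (1-t) + (1-t) * Real.logb 2 (1-t) :=
    mul_logb_two_mul (1-t) (by linarith)
  have hlog2 : (0:ℝ) < Real.log 2 := Real.log_pos (by norm_num)
  have hbe : t * Real.logb 2 t + (1-t) * Real.logb 2 (1-t)
      = - Real.binEntropy t / Real.log 2 := by
    rw [Real.binEntropy, Real.log_inv, Real.log_inv, Real.logb, Real.logb]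
    field_simp; ring
  have hkey := binent_ge t ht0 ht1
  have hstep : 1 + (- Real.binEntropy t / Real.log 2) ≤ |2*t - 1| := by
    have h' : - Real.binEntropy t / Real.log 2 ≤ |2*t - 1| - 1 := by
      rw [div_le_iff₀ hlog2]; nlinarith [hkey]
    linarith
  have habs : |p - q| = s * |2*t - 1| := by
    rw [hps, hqs, show s*t - s*(1-t) = s * (2*t-1) by ring, abs_mul,
      abs_of_pos hspos]
  calc 1/2 * p * Real.logb 2 (p/(1/2*p+1/2*q)) + 1/2 * q * Real.logb 2 (q/(1/2*p+1/2*q))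
      = s/2 * (t * Real.logb 2 (2*t) + (1-t) * Real.logb 2 (2*(1-t))) := by
        rw [harg1, harg2, hps, hqs]; ring
    _ = s/2 * (1 + (- Real.binEntropy t / Real.log 2)) := by rw [h1, h2, ← hbe]; ring
    _ ≤ s/2 * |2*t - 1| := by
        apply mul_le_mul_of_nonneg_left hstep (by linarith)
    _ = 1/2 * |p - q| := by rw [habs]; ring

/-- `I(W) ≤ √(1 − Z(W)²)`. -/
theorem symCap_le_sqrt_one_sub_bhatt_sq
    {Y : Type*} [Fintype Y] (W : Y → Bool → ℝ)
    (hnonneg : ∀ y x, 0 ≤ W y x)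
    (hsum : ∀ x : Bool, ∑ y : Y, W y x = 1) :
    symCap W ≤ Real.sqrt (1 - bhatt W ^ 2) := by
  set Z := bhatt W with hZ
  set T := ∑ y : Y, |W y false - W y true| with hT
  have hT0 : 0 ≤ T := Finset.sum_nonneg fun y _ => abs_nonneg _
  -- Step 1: symCap ≤ (1/2) * T
  have step1 : symCap W ≤ 1/2 * T := by
    rw [symCap, hT, Finset.mul_sum]
    apply Finset.sum_le_sum
    intro y _
    rw [Fintype.sum_bool]
    have h := pointwise (W y false) (W y true) (hnonneg y false) (hnonneg y true)
    calc (1/2) * W y true * Real.logb 2 (W y true / ((1/2) * W y false + (1/2) * W y true))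
          + (1/2) * W y false * Real.logb 2 (W y false / ((1/2) * W y false + (1/2) * W y true))
        = 1/2 * W y false * Real.logb 2 (W y false / (1/2 * W y false + 1/2 * W y true))
          + 1/2 * W y true * Real.logb 2 (W y true / (1/2 * W y false + 1/2 * W y true)) := by
          ring_nf
      _ ≤ 1/2 * |W y false - W y true| := h
  -- Step 2: Cauchy-Schwarz gives T^2 ≤ 4 - 4Z^2
  have hminus : ∑ y : Y, (Real.sqrt (W y false) - Real.sqrt (W y true))^2 = 2 - 2*Z := by
    have : ∀ y : Y, (Real.sqrt (W y false) - Real.sqrt (W y true))^2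
        = W y false + W y true - 2 * Real.sqrt (W y false * W y true) := by
      intro y
      rw [sub_sq, Real.sq_sqrt (hnonneg y false), Real.sq_sqrt (hnonneg y true),
        Real.sqrt_mul (hnonneg y false)]
      ring
    rw [Finset.sum_congr rfl fun y _ => this y]
    simp only [Finset.sum_sub_distrib, Finset.sum_add_distrib, ← Finset.mul_sum,
      hsum false, hsum true]
    rw [hZ, bhatt]; ring
  have hplus : ∑ y : Y, (Real.sqrt (W y false) + Real.sqrt (W y true))^2 = 2 + 2*Z := by
    have : ∀ y : Y, (Real.sqrt (W y false) + Real.sqrt (W y true))^2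
        = W y false + W y true + 2 * Real.sqrt (W y false * W y true) := by
      intro y
      rw [add_sq, Real.sq_sqrt (hnonneg y false), Real.sq_sqrt (hnonneg y true),
        Real.sqrt_mul (hnonneg y false)]
      ring
    rw [Finset.sum_congr rfl fun y _ => this y]
    simp only [Finset.sum_add_distrib, ← Finset.mul_sum, hsum false, hsum true]
    rw [hZ, bhatt]; ring
  have hsq : T ^ 2 ≤ 4 - 4 * Z^2 := by
    have key : ∀ y : Y, |W y false - W y true|
        = |Real.sqrt (W y false) - Real.sqrt (W y true)|
          * (Real.sqrt (W y false) + Real.sqrt (W y true)) := by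
      intro y
      have h1 : W y false - W y true
          = (Real.sqrt (W y false) - Real.sqrt (W y true))
            * (Real.sqrt (W y false) + Real.sqrt (W y true)) := by
        have := Real.sq_sqrt (hnonneg y false)
        have := Real.sq_sqrt (hnonneg y true)
        nlinarith
      rw [h1, abs_mul, abs_of_nonneg (show (0:ℝ) ≤ Real.sqrt (W y false) + Real.sqrt (W y true) by positivity)]
    calc T ^ 2
        = (∑ y : Y, |Real.sqrt (W y false) - Real.sqrt (W y true)|
            * (Real.sqrt (W y false) + Real.sqrt (W y true))) ^ 2 := by
          rw [hT]; congr 1; exact Finset.sum_congr rfl fun y _ => key y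
      _ ≤ (∑ y : Y, |Real.sqrt (W y false) - Real.sqrt (W y true)|^2)
            * (∑ y : Y, (Real.sqrt (W y false) + Real.sqrt (W y true))^2) :=
          Finset.sum_mul_sq_le_sq_mul_sq _ _ _
      _ = (∑ y : Y, (Real.sqrt (W y false) - Real.sqrt (W y true))^2)
            * (∑ y : Y, (Real.sqrt (W y false) + Real.sqrt (W y true))^2) := by
          congr 1; exact Finset.sum_congr rfl fun y _ => sq_abs _
      _ = (2 - 2*Z) * (2 + 2*Z) := by rw [hminus, hplus]
      _ = 4 - 4 * Z^2 := by ring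
  -- Conclude
  have step2 : 1/2 * T ≤ Real.sqrt (1 - Z^2) := by
    rw [Real.le_sqrt (by linarith)]
    · nlinarith [hsq]
    · nlinarith [hsq, sq_nonneg T]
  linarith
end

section
/- For the BEC polarization martingale (Zₙ) with Z₀ = ε (defined by Zₙ₊₁ = Zₙ² or 2Zₙ−Zₙ² each with probability 1/2), the almost-sure limit Z_∞ exists and takes values in {0,1} almost surely, with P(Z_∞ = 0) = 1 − ε and P(Z_∞ = 1) = ε. -/
open MeasureTheory ProbabilityTheory Filter

/-- For the BEC polarization process driven by i.i.d. fair coin flips with `Z₀ = ε`,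
the almost-sure limit `Z_∞` exists, takes values in `{0,1}` almost surely, and
satisfies `P(Z_∞ = 1) = ε` and `P(Z_∞ = 0) = 1 − ε`. -/
theorem polarization_process_limit
    {Ω : Type*} [m0 : MeasurableSpace Ω] (μ : Measure Ω) [IsProbabilityMeasure μ]
    (B : ℕ → Ω → Bool) (hBmeas : ∀ n, Measurable (B n))
    (hBindep : iIndepFun B μ)
    (hBfair : ∀ n, μ (B n ⁻¹' {true}) = 1/2)
    (ε : ℝ) (hε : ε ∈ Set.Icc (0:ℝ) 1)
    (Z : ℕ → Ω → ℝ)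
    (hZ0 : ∀ ω, Z 0 ω = ε)
    (hZrec : ∀ n ω, Z (n+1) ω =
      if B (n+1) ω = true then (Z n ω) ^ 2 else 2 * Z n ω - (Z n ω) ^ 2) :
    ∃ Zlim : Ω → ℝ,
      (∀ᵐ ω ∂μ, Tendsto (fun n => Z n ω) atTop (nhds (Zlim ω))) ∧
      (∀ᵐ ω ∂μ, Zlim ω = 0 ∨ Zlim ω = 1) ∧
      μ {ω | Zlim ω = 1} = ENNReal.ofReal ε ∧
      μ {ω | Zlim ω = 0} = ENNReal.ofReal (1 - ε) := by
  classical
  obtain ⟨hε0, hε1⟩ := hε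
  -- Z stays in [0,1]
  have hZmem : ∀ n ω, 0 ≤ Z n ω ∧ Z n ω ≤ 1 := by
    intro n
    induction n with
    | zero => intro ω; rw [hZ0]; exact ⟨hε0, hε1⟩
    | succ n ih =>
      intro ω
      obtain ⟨h0, h1⟩ := ih ω
      rw [hZrec]
      split
      · constructor <;> nlinarith
      · constructor <;> nlinarith
  -- the sigma algebras
  set s : ℕ → MeasurableSpace Ω :=
    fun i => MeasurableSpace.comap (B i) inferInstance with hs_def
  have hs_le : ∀ i, s i ≤ m0 := fun i => (hBmeas i).comap_le
  let ℱ : Filtration ℕ m0 :=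
    { seq := fun n => ⨆ i ∈ Set.Iic n, s i
      mono' := fun n m hnm => biSup_mono fun i hi => le_trans hi hnm
      le' := fun n => iSup₂_le fun i _ => hs_le i }
  have hsle : ∀ i n, i ≤ n → s i ≤ ℱ n := fun i n h => le_biSup _ h
  have hBs : ∀ i, Measurable[s i] (B i) := fun i => Measurable.of_comap_le le_rfl
  -- Z n is ℱ n - measurable
  have hZmeasF : ∀ n, Measurable[ℱ n] (Z n) := by
    intro n
    induction n with
    | zero =>
      have h : Z 0 = fun _ => ε := funext hZ0
      rw [h]; exact measurable_const
    | succ n ih =>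
      have hrec : Z (n+1) =
          fun ω => if B (n+1) ω = true then (Z n ω)^2 else 2 * Z n ω - (Z n ω)^2 :=
        funext (hZrec n)
      rw [hrec]
      have hZn : Measurable[ℱ (n+1)] (Z n) := ih.mono (ℱ.mono (Nat.le_succ n)) le_rfl
      have hBn : Measurable[ℱ (n+1)] (B (n+1)) :=
        (hBs (n+1)).mono (hsle (n+1) (n+1) le_rfl) le_rfl
      exact Measurable.ite (hBn (measurableSet_singleton true))
        (hZn.pow_const 2) ((measurable_const.mul hZn).sub (hZn.pow_const 2))
  have hZmeas : ∀ n, Measurable (Z n) := fun n => (hZmeasF n).mono (ℱ.le n) le_rfl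
  have hZnorm : ∀ n ω, ‖Z n ω‖ ≤ 1 := by
    intro n ω
    obtain ⟨h0, h1⟩ := hZmem n ω
    rw [Real.norm_eq_abs, abs_le]; exact ⟨by linarith, h1⟩
  have hZint : ∀ n, Integrable (Z n) μ := fun n =>
    (integrable_const (1:ℝ)).mono' (hZmeas n).aestronglyMeasurable
      (ae_of_all _ fun ω => hZnorm n ω)
  -- key set-integral identity
  have hkey : ∀ i (t : Set Ω), MeasurableSet[ℱ i] t →
      ∫ ω in t, Z i ω ∂μ = ∫ ω in t, Z (i+1) ω ∂μ := by
    intro i t ht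
    have htm : MeasurableSet t := ℱ.le i t ht
    set R : Ω → ℝ := fun ω => if B (i+1) ω = true then (-1:ℝ) else 1 with hR_def
    set W : Ω → ℝ := fun ω => Z i ω - (Z i ω)^2 with hW_def
    have hdecomp : ∀ ω, Z (i+1) ω = Z i ω + R ω * W ω := by
      intro ω
      rw [hZrec]
      by_cases h : B (i+1) ω = true
      · rw [if_pos h]
        have hR : R ω = -1 := if_pos h
        have hW : W ω = Z i ω - (Z i ω)^2 := rfl
        rw [hR, hW]; ring
      · rw [if_neg h]
        have hR : R ω = 1 := if_neg h
        have hW : W ω = Z i ω - (Z i ω)^2 := rfl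
        rw [hR, hW]; ring
    have hWmeasF : Measurable[ℱ i] W := (hZmeasF i).sub ((hZmeasF i).pow_const 2)
    have hXmeasF : Measurable[ℱ i] (t.indicator W) := hWmeasF.indicator ht
    have hXmeas : Measurable (t.indicator W) := hXmeasF.mono (ℱ.le i) le_rfl
    have hRmeasS : Measurable[s (i+1)] R :=
      Measurable.ite ((hBs (i+1)) (measurableSet_singleton true)) measurable_const
        measurable_const
    have hRmeas : Measurable R := hRmeasS.mono (hs_le (i+1)) le_rfl
    have hIndep : Indep (ℱ i) (s (i+1)) μ := by
      have hdisj : Disjoint (Set.Iic i) ({i+1} : Set ℕ) := by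
        simp only [Set.disjoint_left, Set.mem_Iic, Set.mem_singleton_iff]
        omega
      have h := indep_iSup_of_disjoint hs_le hBindep.iIndep hdisj
      simpa only [Set.mem_singleton_iff, iSup_iSup_eq_left] using h
    have hIndepF : IndepFun (t.indicator W) R μ :=
      indep_of_indep_of_le_right (indep_of_indep_of_le_left hIndep hXmeasF.comap_le)
        hRmeasS.comap_le
    have hWnorm : ∀ ω, ‖W ω‖ ≤ 1 := by
      intro ω
      obtain ⟨h0, h1⟩ := hZmem i ω
      have hW : W ω = Z i ω - (Z i ω)^2 := rfl
      rw [hW, Real.norm_eq_abs, abs_le]; constructor <;> nlinarith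
    have hRnorm : ∀ ω, ‖R ω‖ ≤ 1 := by
      intro ω
      by_cases h : B (i+1) ω = true <;> simp [hR_def, h]
    have hXint : Integrable (t.indicator W) μ :=
      (integrable_const (1:ℝ)).mono' hXmeas.aestronglyMeasurable
        (ae_of_all _ fun ω => by
          by_cases h : ω ∈ t
          · rw [Set.indicator_of_mem h]; exact hWnorm ω
          · rw [Set.indicator_of_notMem h]; simp)
    have hRint : Integrable R μ :=
      (integrable_const (1:ℝ)).mono' hRmeas.aestronglyMeasurable
        (ae_of_all _ fun ω => hRnorm ω)
    have hRWint : Integrable (fun ω => R ω * W ω) μ :=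
      (integrable_const (1:ℝ)).mono'
        (hRmeas.mul (hWmeasF.mono (ℱ.le i) le_rfl)).aestronglyMeasurable
        (ae_of_all _ fun ω => by
          rw [norm_mul]
          calc ‖R ω‖ * ‖W ω‖ ≤ 1 * 1 :=
                mul_le_mul (hRnorm ω) (hWnorm ω) (norm_nonneg _) zero_le_one
            _ = 1 := by ring)
    have hmul : ∫ ω, t.indicator W ω * R ω ∂μ =
        (∫ ω, t.indicator W ω ∂μ) * ∫ ω, R ω ∂μ :=
      IndepFun.integral_fun_mul_eq_mul_integral hIndepF hXint.aestronglyMeasurable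
        hRint.aestronglyMeasurable
    -- ∫ R = 0
    have hAmeas : MeasurableSet (B (i+1) ⁻¹' {true}) :=
      hBmeas (i+1) (measurableSet_singleton true)
    have hRrepr : R = fun ω =>
        1 - 2 * Set.indicator (B (i+1) ⁻¹' {true}) (fun _ => (1:ℝ)) ω := by
      funext ω
      by_cases h : B (i+1) ω = true <;>
        simp [hR_def, h, Set.indicator_apply, Set.mem_preimage] <;> norm_num
    have hIndInt : Integrable (Set.indicator (B (i+1) ⁻¹' {true}) (fun _ => (1:ℝ))) μ :=
      (integrable_const (1:ℝ)).indicator hAmeas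
    have hRint0 : ∫ ω, R ω ∂μ = 0 := by
      rw [hRrepr]
      rw [integral_sub (integrable_const 1) (hIndInt.const_mul 2), integral_const_mul 2,
        integral_indicator_const (1:ℝ) hAmeas, measureReal_def, hBfair, integral_const, probReal_univ]
      norm_num
    -- put things together
    have hsplit : ∫ ω in t, Z (i+1) ω ∂μ
        = ∫ ω in t, Z i ω ∂μ + ∫ ω in t, R ω * W ω ∂μ := by
      have h1 : ∫ ω in t, Z (i+1) ω ∂μ = ∫ ω in t, (Z i ω + R ω * W ω) ∂μ :=
        integral_congr_ae (ae_of_all _ fun ω => hdecomp ω)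
      rw [h1, integral_add ((hZint i).restrict) (hRWint.restrict)]
    have hRW0 : ∫ ω in t, R ω * W ω ∂μ = 0 := by
      have h2 : ∫ ω in t, R ω * W ω ∂μ = ∫ ω, t.indicator W ω * R ω ∂μ := by
        rw [← integral_indicator htm]
        congr 1
        funext ω
        by_cases h : ω ∈ t <;> simp [h, mul_comm]
      rw [h2, hmul, hRint0, mul_zero]
    rw [hsplit, hRW0, add_zero]
  -- the martingale
  have hadapted : StronglyAdapted ℱ Z := fun n => (hZmeasF n).stronglyMeasurable
  have hmart : Martingale Z ℱ μ := martingale_of_setIntegral_eq_succ hadapted hZint hkey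
  have hbdd : ∀ n, eLpNorm (Z n) 1 μ ≤ ((1 : NNReal) : ENNReal) := by
    intro n
    refine le_trans (eLpNorm_le_of_ae_bound (C := 1) (ae_of_all _ fun ω => hZnorm n ω)) ?_
    simp
  have hae : ∀ᵐ ω ∂μ, Tendsto (fun n => Z n ω) atTop (nhds (ℱ.limitProcess Z μ ω)) :=
    hmart.submartingale.ae_tendsto_limitProcess hbdd
  set Zlim : Ω → ℝ := ℱ.limitProcess Z μ with hZlim_def
  have hZlimMeas : Measurable Zlim :=
    (Filtration.stronglyMeasurable_limit_process').measurable
  -- limit takes values in {0,1} a.s.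
  have h01 : ∀ᵐ ω ∂μ, Zlim ω = 0 ∨ Zlim ω = 1 := by
    filter_upwards [hae] with ω hω
    set L := Zlim ω with hL
    have h2 : Tendsto (fun n => Z (n+1) ω) atTop (nhds L) :=
      hω.comp (tendsto_add_atTop_nat 1)
    have h3 : Tendsto (fun n => |Z (n+1) ω - Z n ω|) atTop (nhds |L - L|) :=
      (h2.sub hω).abs
    have h4 : (fun n => |Z (n+1) ω - Z n ω|) = fun n => Z n ω - (Z n ω)^2 := by
      funext n
      obtain ⟨h0, h1⟩ := hZmem n ω
      rw [hZrec]
      split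
      · rw [abs_of_nonpos (by nlinarith)]; ring
      · rw [abs_of_nonneg (by nlinarith)]; ring
    rw [h4] at h3
    have h5 : Tendsto (fun n => Z n ω - (Z n ω)^2) atTop (nhds (L - L^2)) :=
      hω.sub (hω.pow 2)
    have hLL : L - L^2 = 0 := by
      have h6 := tendsto_nhds_unique h5 h3
      simpa using h6
    have hfac : L * (1 - L) = 0 := by ring_nf; nlinarith [hLL]
    rcases mul_eq_zero.mp hfac with h | h
    · exact Or.inl h
    · exact Or.inr (by linarith)
  -- expectations
  have hEZ : ∀ n, ∫ ω, Z n ω ∂μ = ε := by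
    intro n
    induction n with
    | zero =>
      have h : (fun ω => Z 0 ω) = fun _ => ε := funext hZ0
      rw [h, integral_const, probReal_univ]; simp
    | succ n ih =>
      have h := hkey n Set.univ MeasurableSet.univ
      rw [setIntegral_univ, setIntegral_univ] at h
      rw [← h, ih]
  have hElim : ∫ ω, Zlim ω ∂μ = ε := by
    have hconv : Tendsto (fun n => ∫ ω, Z n ω ∂μ) atTop (nhds (∫ ω, Zlim ω ∂μ)) := by
      refine tendsto_integral_of_dominated_convergence (fun _ => (1:ℝ))
        (fun n => (hZmeas n).aestronglyMeasurable) (integrable_const 1)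
        (fun n => ae_of_all _ fun ω => hZnorm n ω) hae
    have hconst : Tendsto (fun n => ∫ ω, Z n ω ∂μ) atTop (nhds ε) := by
      simp only [hEZ]; exact tendsto_const_nhds
    exact tendsto_nhds_unique hconv hconst
  -- the two events
  set A1 : Set Ω := {ω | Zlim ω = 1} with hA1_def
  set A0 : Set Ω := {ω | Zlim ω = 0} with hA0_def
  have hA1m : MeasurableSet A1 := hZlimMeas (measurableSet_singleton 1)
  have hA0m : MeasurableSet A0 := hZlimMeas (measurableSet_singleton 0)
  have hind : Zlim =ᵐ[μ] A1.indicator (fun _ => (1:ℝ)) := by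
    filter_upwards [h01] with ω hω
    rcases hω with h | h
    · have : ω ∉ A1 := by simp [hA1_def, h]
      rw [Set.indicator_of_notMem this, h]
    · have : ω ∈ A1 := by simp [hA1_def, h]
      rw [Set.indicator_of_mem this, h]
  have hμ1toReal : (μ A1).toReal = ε := by
    have h := integral_congr_ae hind
    rw [hElim, integral_indicator_const (1:ℝ) hA1m] at h
    have h' : μ.real A1 = ε := by simpa using h.symm
    exact h'
  have hμ1 : μ A1 = ENNReal.ofReal ε := by
    rw [← hμ1toReal, ENNReal.ofReal_toReal (measure_ne_top μ _)]
  have hdisj : Disjoint A0 A1 := by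
    rw [Set.disjoint_left]
    intro ω h0 h1
    rw [hA0_def, Set.mem_setOf_eq] at h0
    rw [hA1_def, Set.mem_setOf_eq] at h1
    rw [h0] at h1
    exact zero_ne_one h1
  have hunion : μ (A0 ∪ A1) = 1 := by
    rw [← prob_compl_eq_zero_iff (hA0m.union hA1m)]
    have hcompl : (A0 ∪ A1)ᶜ = {ω | ¬ (Zlim ω = 0 ∨ Zlim ω = 1)} := by
      ext ω
      simp [hA0_def, hA1_def]
    rw [hcompl]
    exact ae_iff.mp h01
  have hadd : μ A0 + μ A1 = 1 := by
    rw [← measure_union hdisj hA1m, hunion]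
  have hsum : ENNReal.ofReal (1 - ε) + ENNReal.ofReal ε = 1 := by
    rw [← ENNReal.ofReal_add (by linarith) hε0]
    norm_num
  have hμ0 : μ A0 = ENNReal.ofReal (1 - ε) := by
    have h := hadd
    rw [hμ1, ← hsum] at h
    exact (ENNReal.add_left_inj (by simp)).mp h
  exact ⟨Zlim, hae, h01, hμ1, hμ0⟩
end

section
/- Margulis–Russo lemma: Let Ω ⊆ {0,1}^N be a monotone (upward-closed) set and μ_p the product Bernoulli(p) measure on {0,1}^N. Then d/dp μ_p(Ω) = Σ_{j=1}^N I_j^{(p)}(Ω), where I_j^{(p)}(Ω) = μ_p({x : 1_Ω(x) ≠ 1_Ω(x^{(j)})}) is the influence of coordinate j and x^{(j)} is x with the j-th bit flipped. -/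
open Finset

/-- The `μ_p`-weight of a point `x ∈ {0,1}^N` under the product Bernoulli(p) measure. -/
noncomputable def bernWeight {N : ℕ} (p : ℝ) (x : Fin N → Bool) : ℝ :=
  ∏ j : Fin N, (if x j then p else 1 - p)

/-- Margulis–Russo lemma: for a monotone set `Ω ⊆ {0,1}^N`, the derivative in `p` of
`μ_p(Ω)` equals the total influence `∑_j I_j^{(p)}(Ω)`, where `I_j^{(p)}(Ω)` is the
`μ_p`-measure of the set of points where flipping coordinate `j` changes
membership in `Ω`. -/
theorem margulis_russo {N : ℕ} (Ω : Finset (Fin N → Bool))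
    (hmono : ∀ x y : Fin N → Bool, (∀ j, x j = true → y j = true) → x ∈ Ω → y ∈ Ω)
    (p : ℝ) :
    HasDerivAt (fun q => ∑ x ∈ Ω, bernWeight q x)
      (∑ j : Fin N,
        ∑ x ∈ Finset.univ.filter
          (fun x : Fin N → Bool =>
            ¬ (x ∈ Ω ↔ Function.update x j (!x j) ∈ Ω)),
          bernWeight p x)
      p := by
  classical
  -- notation
  set φ : Fin N → (Fin N → Bool) → (Fin N → Bool) :=
    fun j x => Function.update x j (!x j) with hφ
  set F : Fin N → (Fin N → Bool) → ℝ :=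
    fun j x => ∏ k ∈ (univ : Finset (Fin N)).erase j, (if x k then p else 1 - p) with hF
  have hφφ : ∀ j x, φ j (φ j x) = x := by
    intro j x
    funext k
    by_cases hk : k = j
    · subst hk
      simp [φ, Function.update_self]
    · simp [φ, Function.update_of_ne hk]
  have hφj : ∀ j x, φ j x j = !x j := by
    intro j x; simp [φ]
  have hφk : ∀ j x k, k ≠ j → φ j x k = x k := by
    intro j x k hk; simp [φ, Function.update_of_ne hk]
  have hFφ : ∀ j x, F j (φ j x) = F j x := by
    intro j x
    apply Finset.prod_congr rfl
    intro k hk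
    rw [hφk j x k (Finset.ne_of_mem_erase hk)]
  -- derivative of each weight
  have hderiv : ∀ x : Fin N → Bool, HasDerivAt (fun q => bernWeight q x)
      (∑ j : Fin N, F j x * (if x j then (1:ℝ) else -1)) p := by
    intro x
    have h : ∀ j ∈ (univ : Finset (Fin N)), HasDerivAt
        (fun q : ℝ => if x j then q else 1 - q) (if x j then (1:ℝ) else -1) p := by
      intro j _
      by_cases hj : x j
      · simp only [hj, ↓reduceIte]; exact hasDerivAt_id p
      · simpa [hj] using (hasDerivAt_id p).const_sub 1
    have := HasDerivAt.fun_finsetProd h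
    simp only [smul_eq_mul] at this
    have heq : (fun q => bernWeight q x) = (∏ i ∈ univ, (fun q : ℝ => if x i then q else 1 - q) ·) := by
      funext q; simp [bernWeight]
    rw [heq]
    exact this
  have hsum := HasDerivAt.fun_sum (fun x (_ : x ∈ Ω) => hderiv x)
  refine hsum.congr_deriv (Eq.symm ?_)
  rw [Finset.sum_comm]
  apply Finset.sum_congr rfl
  intro j _
  -- per-coordinate identity
  set A : Finset (Fin N → Bool) :=
    univ.filter (fun x => x j = true ∧ x ∈ Ω ∧ φ j x ∉ Ω) with hA
  set Piv : Finset (Fin N → Bool) :=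
    univ.filter (fun x : Fin N → Bool => ¬ (x ∈ Ω ↔ Function.update x j (!x j) ∈ Ω)) with hPiv
  have hPivφ : Piv = univ.filter (fun x => ¬ (x ∈ Ω ↔ φ j x ∈ Ω)) := rfl
  -- mono helpers
  have hmono1 : ∀ x, x j = true → φ j x ∈ Ω → x ∈ Ω := by
    intro x hxj h
    refine hmono (φ j x) x ?_ h
    intro k hk
    by_cases hkj : k = j
    · subst hkj; exact hxj
    · rw [hφk j x k hkj] at hk; exact hk
  have hmono2 : ∀ x, x j = false → x ∈ Ω → φ j x ∈ Ω := by
    intro x hxj h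
    refine hmono x (φ j x) ?_ h
    intro k hk
    by_cases hkj : k = j
    · subst hkj; rw [hxj] at hk; exact absurd hk (by simp)
    · rw [hφk j x k hkj]; exact hk
  -- characterize Piv pieces
  have hPivT : Piv.filter (fun x => x j = true) = A := by
    ext x
    simp only [hPivφ, hA, Finset.mem_filter, Finset.mem_univ, true_and]
    constructor
    · rintro ⟨hniff, hxj⟩
      have hφn : φ j x ∉ Ω := fun h => hniff ⟨fun _ => h, fun _ => hmono1 x hxj h⟩
      have hxΩ : x ∈ Ω := by
        by_contra hxn
        exact hniff ⟨fun h => absurd h hxn, fun h => absurd h hφn⟩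
      exact ⟨hxj, hxΩ, hφn⟩
    · rintro ⟨hxj, hxΩ, hφn⟩
      exact ⟨fun hiff => hφn (hiff.1 hxΩ), hxj⟩
  have hPivF : ∀ x, x ∈ Piv.filter (fun x => ¬ x j = true) → φ j x ∈ A := by
    intro x hx
    simp only [hPivφ, Finset.mem_filter, Finset.mem_univ, true_and] at hx
    obtain ⟨hniff, hxj⟩ := hx
    have hxj' : x j = false := by simpa using hxj
    simp only [hA, Finset.mem_filter, Finset.mem_univ, true_and, hφφ]
    refine ⟨by simp [hφj, hxj'], ?_, ?_⟩
    · by_contra hn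
      have hxn : x ∉ Ω := fun h => hn (hmono2 x hxj' h)
      exact hniff ⟨fun h => absurd h hxn, fun h => absurd h hn⟩
    · intro hxΩ
      exact hniff ⟨fun h => hmono2 x hxj' h, fun _ => hxΩ⟩
  -- RHS computation
  have hbern : ∀ x, bernWeight p x = (if x j then p else 1 - p) * F j x := by
    intro x
    rw [bernWeight, ← Finset.mul_prod_erase _ _ (Finset.mem_univ j)]
  have hRHS : ∑ x ∈ Piv, bernWeight p x = ∑ x ∈ A, F j x := by
    rw [← Finset.sum_filter_add_sum_filter_not Piv (fun x => x j = true)]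
    have h1 : ∑ x ∈ Piv.filter (fun x => x j = true), bernWeight p x
        = ∑ x ∈ A, p * F j x := by
      rw [hPivT]
      apply Finset.sum_congr rfl
      intro x hx
      simp only [hA, Finset.mem_filter] at hx
      rw [hbern, hx.2.1]; simp
    have h2 : ∑ x ∈ Piv.filter (fun x => ¬ x j = true), bernWeight p x
        = ∑ x ∈ A, (1 - p) * F j x := by
      refine Finset.sum_nbij' (φ j) (φ j) hPivF ?_ (fun x _ => hφφ j x) (fun x _ => hφφ j x) ?_
      · intro x hx
        simp only [hA, Finset.mem_filter, Finset.mem_univ, true_and] at hx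
        obtain ⟨hxj, hxΩ, hφn⟩ := hx
        simp only [hPivφ, Finset.mem_filter, Finset.mem_univ, true_and]
        constructor
        · intro hiff
          exact hφn (hiff.2 (by rwa [hφφ]))
        · rw [hφj, hxj]; simp
      · intro x hx
        simp only [hPivφ, Finset.mem_filter, Finset.mem_univ, true_and] at hx
        have hxj' : x j = false := by simpa using hx.2
        rw [hbern, hxj', hFφ]; simp
    rw [h1, h2, ← Finset.sum_add_distrib]
    apply Finset.sum_congr rfl
    intro x _
    ring
  -- LHS computation
  have hTsub : ∀ x, x ∈ Ω.filter (fun x => x j = true ∧ φ j x ∈ Ω) → x ∈ Ω.filter (fun x => x j = true) := by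
    intro x hx
    simp only [Finset.mem_filter] at hx ⊢
    exact ⟨hx.1, hx.2.1⟩
  have hLHS : ∑ x ∈ Ω, F j x * (if x j then (1:ℝ) else -1) = ∑ x ∈ A, F j x := by
    rw [← Finset.sum_filter_add_sum_filter_not Ω (fun x => x j = true)]
    have h1 : ∑ x ∈ Ω.filter (fun x => x j = true), F j x * (if x j then (1:ℝ) else -1)
        = ∑ x ∈ Ω.filter (fun x => x j = true), F j x := by
      apply Finset.sum_congr rfl
      intro x hx
      simp only [Finset.mem_filter] at hx
      rw [hx.2]; simp
    have h2 : ∑ x ∈ Ω.filter (fun x => ¬ x j = true), F j x * (if x j then (1:ℝ) else -1)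
        = ∑ x ∈ Ω.filter (fun x => x j = true ∧ φ j x ∈ Ω), -(F j x) := by
      refine Finset.sum_nbij' (φ j) (φ j) ?_ ?_ (fun x _ => hφφ j x) (fun x _ => hφφ j x) ?_
      · intro x hx
        simp only [Finset.mem_filter] at hx ⊢
        have hxj' : x j = false := by simpa using hx.2
        exact ⟨hmono2 x hxj' hx.1, by simp [hφj, hxj'], by rw [hφφ]; exact hx.1⟩
      · intro x hx
        simp only [Finset.mem_filter] at hx ⊢
        refine ⟨hx.2.2, ?_⟩
        rw [hφj, hx.2.1]; simp
      · intro x hx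
        simp only [Finset.mem_filter] at hx
        have hxj' : x j = false := by simpa using hx.2
        rw [hxj', hFφ]; simp
    rw [h1, h2, Finset.sum_neg_distrib]
    rw [eq_comm, ← sub_eq_add_neg, ← Finset.sum_sdiff_eq_sub]
    · congr 1
      ext x
      constructor
      · intro h
        rw [hA, Finset.mem_filter] at h
        obtain ⟨-, hxj, hxΩ, hφn⟩ := h
        rw [Finset.mem_sdiff, Finset.mem_filter, Finset.mem_filter]
        exact ⟨⟨hxΩ, hxj⟩, fun hh => hφn hh.2.2⟩
      · intro h
        rw [Finset.mem_sdiff, Finset.mem_filter, Finset.mem_filter] at h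
        rw [hA, Finset.mem_filter]
        obtain ⟨⟨hxΩ, hxj⟩, hn⟩ := h
        exact ⟨Finset.mem_univ x, hxj, hxΩ, fun hφ => hn ⟨hxΩ, hxj, hφ⟩⟩
    · intro x hx
      simp only [Finset.mem_filter] at hx ⊢
      exact ⟨hmono1 x hx.2.1 hx.2.2, hx.2.1⟩
  rw [hRHS, hLHS]
end

section
/- For transmission over BEC(p) with a uniform codeword from a code whose coordinate EXIT functions are all equal (e.g. a 1-transitive code), each EXIT function h_i(p) = H(X_i | Y_{∼i}) equals the average EXIT function h(p), and the area theorem gives ∫₀¹ h(p) dp = K/N, the rate of the code. -/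
open Finset
open scoped Classical

/-- Support of a codeword. -/
noncomputable def csupp {N : ℕ} (c : Fin N → ZMod 2) : Finset (Fin N) :=
  Finset.univ.filter (fun t => c t ≠ 0)

/-- The MAP EXIT function of coordinate `i` for transmission of a uniform codeword of
the linear code `C` over BEC(p): `h_i(p) = H(X_i | Y_{∼i}) = μ_p(Ω_i)`, the
probability that the erasure pattern on `[N]\{i}` covers (the rest of) the support of
some codeword through `i`. -/
noncomputable def hEXIT (N : ℕ) (C : Submodule (ZMod 2) (Fin N → ZMod 2))
    (i : Fin N) (p : ℝ) : ℝ :=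
  ∑ A ∈ Finset.univ.filter
      (fun A : Finset (Fin N) =>
        i ∉ A ∧ ∃ c ∈ C, c i ≠ 0 ∧ csupp c ⊆ insert i A),
    p ^ A.card * (1 - p) ^ (N - 1 - A.card)


lemma betaNat (a b : ℕ) :
    ∫ x in (0:ℝ)..1, x ^ a * (1 - x) ^ b
      = (a.factorial * b.factorial : ℝ) / (a + b + 1).factorial := by
  induction b generalizing a with
  | zero =>
    have h0 : ((a+0+1).factorial : ℝ) ≠ 0 := by positivity
    simp only [pow_zero, mul_one, Nat.factorial_zero, Nat.cast_one]
    rw [integral_pow, eq_div_iff h0]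
    have : a + 0 + 1 = a + 1 := by omega
    rw [this, Nat.factorial_succ]
    push_cast
    have ha : ((a:ℝ) + 1) ≠ 0 := by positivity
    field_simp
    try ring
  | succ b ih =>
    have hfac : ((a:ℝ)+1) ≠ 0 := by positivity
    have hu : ∀ x ∈ Set.uIcc (0:ℝ) 1, HasDerivAt (fun x : ℝ => (1-x)^(b+1))
        (-((b+1) * (1-x)^b)) x := by
      intro x _
      have h1 : HasDerivAt (fun x : ℝ => 1 - x) (-1) x := (hasDerivAt_id x).const_sub 1
      have := h1.fun_pow (b+1)
      simpa [mul_comm, mul_assoc] using this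
    have hv : ∀ x ∈ Set.uIcc (0:ℝ) 1, HasDerivAt (fun x : ℝ => x^(a+1) / (a+1))
        (x^a) x := by
      intro x _
      have := (hasDerivAt_pow (a+1) x).div_const ((a:ℝ)+1)
      simpa [mul_comm, mul_div_assoc, div_self hfac] using this
    have hparts := intervalIntegral.integral_mul_deriv_eq_deriv_mul hu hv
      (by apply Continuous.intervalIntegrable; continuity)
      (by apply Continuous.intervalIntegrable; continuity)
    simp only [one_pow, sub_self, zero_pow, Nat.succ_ne_zero, ne_eq, not_false_iff,
      zero_mul, mul_zero, zero_div, sub_zero, zero_sub] at hparts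
    have hcomm : (∫ x in (0:ℝ)..1, x ^ a * (1 - x) ^ (b+1))
        = ∫ x in (0:ℝ)..1, (1-x)^(b+1) * x ^ a := by
      simp_rw [mul_comm]
    rw [hcomm, hparts]
    have : (∫ x in (0:ℝ)..1, -((b+1) * (1-x)^b) * (x^(a+1)/(a+1)))
        = -(((b:ℝ)+1)/((a:ℝ)+1)) * ∫ x in (0:ℝ)..1, x^(a+1) * (1-x)^b := by
      rw [← intervalIntegral.integral_const_mul]
      congr 1; ext x; ring
    rw [this, ih (a+1)]
    try simp only [show a+1+b+1 = a+(b+1)+1 from by omega]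
    have h2 : ((a+(b+1)+1).factorial : ℝ) ≠ 0 := by positivity
    field_simp
    push_cast [Nat.factorial_succ]
    ring

lemma csupp_subset_iff {N : ℕ} (c : Fin N → ZMod 2) (E : Finset (Fin N)) :
    csupp c ⊆ E ↔ ∀ t ∉ E, c t = 0 := by
  simp only [csupp, Finset.subset_iff, Finset.mem_filter, Finset.mem_univ, true_and]
  constructor
  · intro h t ht; by_contra hc; exact ht (h hc)
  · intro h t ht; by_contra hc; exact ht (h t hc)

def vanishOn {N : ℕ} (E : Finset (Fin N)) : Submodule (ZMod 2) (Fin N → ZMod 2) where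
  carrier := {c | ∀ t ∉ E, c t = 0}
  add_mem' := fun h1 h2 t ht => by simp [Pi.add_apply, h1 t ht, h2 t ht]
  zero_mem' := fun t ht => rfl
  smul_mem' := fun r c h t ht => by simp [h t ht]

lemma mem_vanishOn {N : ℕ} {E : Finset (Fin N)} {c : Fin N → ZMod 2} :
    c ∈ vanishOn E ↔ ∀ t ∉ E, c t = 0 := Iff.rfl

noncomputable def gdim {N : ℕ} (C : Submodule (ZMod 2) (Fin N → ZMod 2))
    (E : Finset (Fin N)) : ℕ :=
  Module.finrank (ZMod 2) (C ⊓ vanishOn E : Submodule (ZMod 2) (Fin N → ZMod 2))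

lemma gdim_empty {N : ℕ} (C : Submodule (ZMod 2) (Fin N → ZMod 2)) :
    gdim C ∅ = 0 := by
  have : (C ⊓ vanishOn ∅ : Submodule (ZMod 2) (Fin N → ZMod 2)) = ⊥ := by
    rw [eq_bot_iff]
    intro c hc
    have : c ∈ vanishOn (∅ : Finset (Fin N)) := hc.2
    rw [mem_vanishOn] at this
    simp only [Submodule.mem_bot]
    funext t
    exact this t (by simp)
  rw [gdim, this, finrank_bot]

lemma gdim_univ {N : ℕ} (C : Submodule (ZMod 2) (Fin N → ZMod 2)) :
    gdim C Finset.univ = Module.finrank (ZMod 2) C := by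
  have : (C ⊓ vanishOn Finset.univ : Submodule (ZMod 2) (Fin N → ZMod 2)) = C := by
    rw [inf_eq_left]
    intro c _ t ht
    exact absurd (Finset.mem_univ t) ht
  rw [gdim, this]

lemma gdim_insert {N : ℕ} (C : Submodule (ZMod 2) (Fin N → ZMod 2))
    (i : Fin N) (A : Finset (Fin N)) (hi : i ∉ A) :
    gdim C (insert i A)
      = gdim C A + (if ∃ c ∈ C, c i ≠ 0 ∧ csupp c ⊆ insert i A then 1 else 0) := by
  set D1 := (C ⊓ vanishOn (insert i A) : Submodule (ZMod 2) (Fin N → ZMod 2)) with hD1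
  set D0 := (C ⊓ vanishOn A : Submodule (ZMod 2) (Fin N → ZMod 2)) with hD0
  have hle : D0 ≤ D1 := by
    apply inf_le_inf_left
    intro c hc t ht
    exact hc t (fun h => ht (Finset.mem_insert_of_mem h))
  set φ : D1 →ₗ[ZMod 2] ZMod 2 := (LinearMap.proj i).comp D1.subtype with hφ
  have hker : LinearMap.ker φ = Submodule.comap D1.subtype D0 := by
    ext c
    simp only [LinearMap.mem_ker, hφ, LinearMap.comp_apply, LinearMap.proj_apply,
      Submodule.mem_comap, Submodule.coe_subtype, hD0, Submodule.mem_inf]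
    constructor
    · intro h
      refine ⟨c.2.1, fun t ht => ?_⟩
      by_cases hti : t = i
      · subst hti; exact h
      · exact c.2.2 t (by simp [Finset.mem_insert, hti, ht])
    · intro h
      exact h.2 i hi
  have hrn := LinearMap.finrank_range_add_finrank_ker φ
  have hkerdim : Module.finrank (ZMod 2) (LinearMap.ker φ) = gdim C A := by
    rw [hker]
    exact LinearEquiv.finrank_eq (Submodule.comapSubtypeEquivOfLe hle)
  by_cases hcond : ∃ c ∈ C, c i ≠ 0 ∧ csupp c ⊆ insert i A
  · obtain ⟨c, hcC, hci, hcs⟩ := hcond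
    have hcD1 : c ∈ D1 := ⟨hcC, (csupp_subset_iff c _).mp hcs⟩
    have hrange : LinearMap.range φ = ⊤ := by
      rw [eq_top_iff]
      intro x _
      have hy : (c i) ∈ LinearMap.range φ := ⟨⟨c, hcD1⟩, rfl⟩
      have : x = (x * (c i)⁻¹) • (c i) := by
        rw [smul_eq_mul, mul_assoc, inv_mul_cancel₀ hci, mul_one]
      rw [this]
      exact Submodule.smul_mem _ _ hy
    rw [if_pos ⟨c, hcC, hci, hcs⟩]
    have : Module.finrank (ZMod 2) (LinearMap.range φ) = 1 := by
      rw [hrange, finrank_top, Module.finrank_self]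
    show Module.finrank (ZMod 2) D1 = _
    omega
  · have hrange : LinearMap.range φ = ⊥ := by
      rw [eq_bot_iff]
      rintro x ⟨⟨c, hcD1⟩, rfl⟩
      simp only [Submodule.mem_bot]
      by_contra hx
      exact hcond ⟨c, hcD1.1, hx, (csupp_subset_iff c _).mpr hcD1.2⟩
    rw [if_neg hcond]
    have : Module.finrank (ZMod 2) (LinearMap.range φ) = 0 := by
      rw [hrange, finrank_bot]
    show Module.finrank (ZMod 2) D1 = _
    omega

noncomputable def betaW (N a : ℕ) : ℝ :=
  ((a.factorial : ℝ) * (N - 1 - a).factorial) / N.factorial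


lemma card_lt_of_not_mem {N : ℕ} {i : Fin N} {A : Finset (Fin N)} (h : i ∉ A) :
    A.card < N := by
  have : A ⊂ Finset.univ := (ssubset_univ_iff).mpr (fun he => h (he ▸ mem_univ i))
  simpa using Finset.card_lt_card this

lemma hEXIT_continuous (N : ℕ) (C : Submodule (ZMod 2) (Fin N → ZMod 2)) (i : Fin N) :
    Continuous (hEXIT N C i) := by
  unfold hEXIT
  apply continuous_finset_sum
  intro A _
  continuity

lemma integral_hEXIT (N : ℕ) (C : Submodule (ZMod 2) (Fin N → ZMod 2)) (i : Fin N) :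
    ∫ p in (0:ℝ)..1, hEXIT N C i p
      = ∑ A ∈ Finset.univ.filter
          (fun A : Finset (Fin N) =>
            i ∉ A ∧ ∃ c ∈ C, c i ≠ 0 ∧ csupp c ⊆ insert i A),
        betaW N A.card := by
  unfold hEXIT
  rw [intervalIntegral.integral_finset_sum]
  · apply Finset.sum_congr rfl
    intro A hA
    simp only [mem_filter] at hA
    have hcard : A.card < N := card_lt_of_not_mem hA.2.1
    rw [betaNat, betaW]
    have : A.card + (N - 1 - A.card) + 1 = N := by omega
    rw [this]
  · intro A _
    exact (by continuity : Continuous fun p : ℝ =>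
      p ^ A.card * (1 - p) ^ (N - 1 - A.card)).intervalIntegrable _ _

lemma coeff_eq {N : ℕ} (hN : 0 < N) (C : Submodule (ZMod 2) (Fin N → ZMod 2))
    (E : Finset (Fin N)) :
    (gdim C E : ℝ) * ((E.card : ℝ) * betaW N (E.card - 1)
        - ((Eᶜ.card : ℕ) : ℝ) * betaW N E.card)
      = if E = Finset.univ then (Module.finrank (ZMod 2) C : ℝ) else 0 := by
  have hcompl : Eᶜ.card = N - E.card := by
    rw [Finset.card_compl]; simp
  by_cases hu : E = Finset.univ
  · subst hu
    rw [if_pos rfl, gdim_univ]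
    have hcard : (Finset.univ : Finset (Fin N)).card = N := by simp
    rw [hcard] at hcompl ⊢
    rw [hcompl]
    simp only [Nat.sub_self, Nat.cast_zero, zero_mul, sub_zero]
    have h1 : N - 1 - (N - 1) = 0 := by omega
    rw [betaW, h1]
    have h2 : (N : ℝ) * ((((N-1).factorial : ℝ)) * (Nat.factorial 0)) = N.factorial := by
      rw [Nat.factorial_zero]
      push_cast
      rw [mul_one]
      rw_mod_cast [Nat.mul_factorial_pred hN.ne']
    rw [mul_div_assoc'] at *
    rw [show (N:ℝ) * (((N-1).factorial:ℝ) * (Nat.factorial 0)) / N.factorial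
        = ((N:ℝ) * (((N-1).factorial:ℝ) * (Nat.factorial 0))) / N.factorial by ring, h2]
    rw [div_self (by positivity), mul_one]
  · rw [if_neg hu]
    by_cases he : E = ∅
    · subst he; rw [gdim_empty]; simp
    · have hk1 : 1 ≤ E.card := Finset.card_pos.mpr (Finset.nonempty_iff_ne_empty.mpr he)
      have hk2 : E.card < N := by
        have : E ⊂ Finset.univ := (ssubset_univ_iff).mpr hu
        simpa using Finset.card_lt_card this
      set k := E.card with hk
      have key : (k : ℝ) * betaW N (k - 1) = ((N - k : ℕ) : ℝ) * betaW N k := by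
        unfold betaW
        have e1 : N - 1 - (k - 1) = N - k := by omega
        rw [e1]
        have hnat : k * ((k-1).factorial * (N - k).factorial)
            = (N - k) * (k.factorial * (N - 1 - k).factorial) := by
          have h1 : k * (k-1).factorial = k.factorial := Nat.mul_factorial_pred (by omega)
          have h2 : (N - k) * (N - 1 - k).factorial = (N - k).factorial := by
            have : N - 1 - k = (N - k) - 1 := by omega
            rw [this]
            exact Nat.mul_factorial_pred (by omega)
          calc k * ((k-1).factorial * (N - k).factorial)
              = (k * (k-1).factorial) * (N - k).factorial := by ring
            _ = k.factorial * ((N - k) * (N - 1 - k).factorial) := by rw [h1, h2]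
            _ = (N - k) * (k.factorial * (N - 1 - k).factorial) := by ring
        have hcast : (k:ℝ) * (((k-1).factorial:ℝ) * ((N-k).factorial:ℝ))
            = ((N-k:ℕ):ℝ) * ((k.factorial:ℝ) * ((N-1-k).factorial:ℝ)) := by
          exact_mod_cast congrArg (Nat.cast : ℕ → ℝ) hnat
        rw [mul_div_assoc', mul_div_assoc', hcast]
      rw [hcompl, key]
      ring

lemma sum_integral_hEXIT (N : ℕ) (hN : 0 < N) (C : Submodule (ZMod 2) (Fin N → ZMod 2)) :
    ∑ i : Fin N, ∫ p in (0:ℝ)..1, hEXIT N C i p = (Module.finrank (ZMod 2) C : ℝ) := by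
  have step1 : ∀ i : Fin N,
      (∫ p in (0:ℝ)..1, hEXIT N C i p)
        = ∑ A ∈ Finset.univ.filter (fun A : Finset (Fin N) => i ∉ A),
            ((gdim C (insert i A) : ℝ) - gdim C A) * betaW N A.card := by
    intro i
    rw [integral_hEXIT]
    have : Finset.univ.filter
        (fun A : Finset (Fin N) =>
          i ∉ A ∧ ∃ c ∈ C, c i ≠ 0 ∧ csupp c ⊆ insert i A)
        = (Finset.univ.filter (fun A : Finset (Fin N) => i ∉ A)).filter
            (fun A => ∃ c ∈ C, c i ≠ 0 ∧ csupp c ⊆ insert i A) := by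
      rw [Finset.filter_filter]
    rw [this, Finset.sum_filter]
    apply Finset.sum_congr rfl
    intro A hA
    simp only [mem_filter, mem_univ, true_and] at hA
    have := gdim_insert C i A hA
    by_cases hc : ∃ c ∈ C, c i ≠ 0 ∧ csupp c ⊆ insert i A
    · rw [if_pos hc]
      rw [if_pos hc] at this
      rw [this]
      push_cast
      ring
    · rw [if_neg hc]
      rw [if_neg hc] at this
      rw [this]
      push_cast
      ring
  simp_rw [step1, sub_mul, Finset.sum_sub_distrib]
  -- T1: reindex A ↦ insert i A
  have T1 : ∀ i : Fin N,
      ∑ A ∈ Finset.univ.filter (fun A : Finset (Fin N) => i ∉ A),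
          (gdim C (insert i A) : ℝ) * betaW N A.card
        = ∑ E ∈ Finset.univ.filter (fun E : Finset (Fin N) => i ∈ E),
            (gdim C E : ℝ) * betaW N (E.card - 1) := by
    intro i
    refine Finset.sum_bij' (fun A _ => insert i A) (fun E _ => E.erase i) ?_ ?_ ?_ ?_ ?_
    · intro A hA
      simp only [mem_filter, mem_univ, true_and] at hA ⊢
      exact mem_insert_self i A
    · intro E hE
      simp only [mem_filter, mem_univ, true_and] at hE ⊢
      exact notMem_erase i E
    · intro A hA
      simp only [mem_filter, mem_univ, true_and] at hA
      exact Finset.erase_insert hA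
    · intro E hE
      simp only [mem_filter, mem_univ, true_and] at hE
      exact Finset.insert_erase hE
    · intro A hA
      simp only [mem_filter, mem_univ, true_and] at hA
      rw [Finset.card_insert_of_notMem hA]
      simp
  simp_rw [T1]
  -- swap sums
  have swap1 : ∑ i : Fin N, ∑ E ∈ Finset.univ.filter (fun E : Finset (Fin N) => i ∈ E),
      (gdim C E : ℝ) * betaW N (E.card - 1)
      = ∑ E : Finset (Fin N), (E.card : ℝ) * ((gdim C E : ℝ) * betaW N (E.card - 1)) := by
    simp_rw [Finset.sum_filter]
    rw [Finset.sum_comm]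
    apply Finset.sum_congr rfl
    intro E _
    rw [Finset.sum_ite_mem, Finset.univ_inter, Finset.sum_const]
    simp [mul_comm]
  have swap2 : ∑ i : Fin N, ∑ A ∈ Finset.univ.filter (fun A : Finset (Fin N) => i ∉ A),
      (gdim C A : ℝ) * betaW N A.card
      = ∑ E : Finset (Fin N), ((Eᶜ.card : ℕ) : ℝ) * ((gdim C E : ℝ) * betaW N E.card) := by
    simp_rw [Finset.sum_filter]
    rw [Finset.sum_comm]
    apply Finset.sum_congr rfl
    intro E _
    have : ∀ i : Fin N, (if i ∉ E then (gdim C E : ℝ) * betaW N E.card else 0)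
        = (if i ∈ Eᶜ then (gdim C E : ℝ) * betaW N E.card else 0) := by
      intro i; simp [Finset.mem_compl]
    simp_rw [this]
    rw [Finset.sum_ite_mem, Finset.univ_inter, Finset.sum_const]
    simp [mul_comm]
  rw [swap1, swap2, ← Finset.sum_sub_distrib]
  have : ∀ E : Finset (Fin N),
      (E.card : ℝ) * ((gdim C E : ℝ) * betaW N (E.card - 1))
        - ((Eᶜ.card : ℕ) : ℝ) * ((gdim C E : ℝ) * betaW N E.card)
      = if E = Finset.univ then (Module.finrank (ZMod 2) C : ℝ) else 0 := by
    intro E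
    rw [← coeff_eq hN C E]
    ring
  simp_rw [this]
  rw [Finset.sum_ite_eq' Finset.univ (Finset.univ : Finset (Fin N))]
  simp

/-- If all coordinate EXIT functions of a linear code are equal (e.g. for a
1-transitive code), then each equals the average EXIT function, and the area theorem
holds: `∫₀¹ h(p) dp = K/N`, the rate of the code. -/
theorem exit_area_theorem (N : ℕ) (hN : 0 < N)
    (C : Submodule (ZMod 2) (Fin N → ZMod 2))
    (K : ℕ) (hK : K = Module.finrank (ZMod 2) C)
    (heq : ∀ i j : Fin N, ∀ p : ℝ, hEXIT N C i p = hEXIT N C j p) :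
    (∀ i : Fin N, ∀ p : ℝ,
      hEXIT N C i p = (1 / N) * ∑ j : Fin N, hEXIT N C j p) ∧
    (∫ p in (0:ℝ)..1, (1 / N) * ∑ j : Fin N, hEXIT N C j p) = (K : ℝ) / N := by
  have hNne : (N : ℝ) ≠ 0 := by exact_mod_cast hN.ne'
  constructor
  · intro i p
    have hsum : ∑ j : Fin N, hEXIT N C j p = N * hEXIT N C i p := by
      rw [Finset.sum_congr rfl (fun j _ => heq j i p)]
      simp [Finset.card_univ, mul_comm]
    rw [hsum, ← mul_assoc, one_div, inv_mul_cancel₀ hNne, one_mul]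
  · rw [intervalIntegral.integral_const_mul]
    rw [intervalIntegral.integral_finset_sum
      (fun j _ => (hEXIT_continuous N C j).intervalIntegrable 0 1)]
    rw [sum_integral_hEXIT N hN C, ← hK, one_div, inv_mul_eq_div]
end
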